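/- Let V be a nonnegative C¹ function with ∇V · f ≤ −V on M₊ and V⁻¹({0}) ∩ M₊ = A (a compact subset of M₊). Then the infimum p₃* of ∫_{M₊} w dλ over all pairs (w, V') of a continuous w ≥ 0 and a nonnegative C¹ function V' with w + V' ≥ 1 and ∇V' · f ≤ −V' on M₊ satisfies p₃* ≤ λ(A). -/

import Mathlib

open Set MeasureTheory Filter

/-- Upper bound p₃* ≤ λ(A) for the Lyapunov LP, given a Lyapunov function whose
zero set in M₊ is A. -/
theorem lyapunov_lp_upper_bound {n : ℕ}
    (f : EuclideanSpace ℝ (Fin n) → EuclideanSpace ℝ (Fin n))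
    (M A : Set (EuclideanSpace ℝ (Fin n)))
    (hMc : IsCompact M) (hMmeas : MeasurableSet M)
    (hAc : IsCompact A) (hAM : A ⊆ M) (hAmeas : MeasurableSet A)
    (V : EuclideanSpace ℝ (Fin n) → ℝ) (hV : ContDiff ℝ 1 V)
    (hV0 : ∀ x, 0 ≤ V x)
    (hLyap : ∀ x ∈ M, fderiv ℝ V x (f x) ≤ -V x)
    (hzero : V ⁻¹' {0} ∩ M = A) :
    sInf {c : ℝ | ∃ w V' : EuclideanSpace ℝ (Fin n) → ℝ,
        ContinuousOn w M ∧ ContDiff ℝ 1 V' ∧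
        (∀ x ∈ M, 0 ≤ w x) ∧ (∀ x, 0 ≤ V' x) ∧
        (∀ x ∈ M, 1 ≤ w x + V' x) ∧
        (∀ x ∈ M, fderiv ℝ V' x (f x) ≤ -V' x) ∧
        c = ∫ x in M, w x} ≤ (volume A).toReal := by
  set S : Set ℝ := {c : ℝ | ∃ w V' : EuclideanSpace ℝ (Fin n) → ℝ,
        ContinuousOn w M ∧ ContDiff ℝ 1 V' ∧
        (∀ x ∈ M, 0 ≤ w x) ∧ (∀ x, 0 ≤ V' x) ∧
        (∀ x ∈ M, 1 ≤ w x + V' x) ∧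
        (∀ x ∈ M, fderiv ℝ V' x (f x) ≤ -V' x) ∧
        c = ∫ x in M, w x} with hS
  have hVdiff : Differentiable ℝ V := hV.differentiable one_ne_zero
  -- the family of feasible pairs
  set F : ℕ → EuclideanSpace ℝ (Fin n) → ℝ :=
    fun k x => max (1 - (k : ℝ) * V x) 0 with hF
  have hFcont : ∀ k, Continuous (F k) := fun k =>
    ((continuous_const.sub (continuous_const.mul hV.continuous)).max continuous_const)
  have hmem : ∀ k : ℕ, (∫ x in M, F k x) ∈ S := by
    intro k
    refine ⟨F k, fun x => (k : ℝ) * V x, (hFcont k).continuousOn,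
      contDiff_const.mul hV, fun x _ => le_max_right _ _,
      fun x => mul_nonneg (Nat.cast_nonneg k) (hV0 x), ?_, ?_, rfl⟩
    · intro x _
      have : 1 - (k : ℝ) * V x ≤ F k x := le_max_left _ _
      show 1 ≤ F k x + (k : ℝ) * V x
      linarith
    · intro x hx
      have hd : fderiv ℝ (fun y => (k : ℝ) * V y) x = (k : ℝ) • fderiv ℝ V x :=
        fderiv_const_mul (hVdiff x) _
      rw [hd]
      simp only [ContinuousLinearMap.smul_apply, smul_eq_mul]
      have := mul_le_mul_of_nonneg_left (hLyap x hx) (Nat.cast_nonneg (α := ℝ) k)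
      linarith
  have hbdd : BddBelow S := by
    refine ⟨0, ?_⟩
    rintro c ⟨w, V', hwc, _, hw0, _, _, _, rfl⟩
    exact setIntegral_nonneg hMmeas hw0
  -- the limit function
  have hVzero : ∀ x ∈ M, (V x = 0 ↔ x ∈ A) := by
    intro x hx
    constructor
    · intro h; rw [← hzero]; exact ⟨h, hx⟩
    · intro h; rw [← hzero] at h; exact h.1
  have hMfin : volume M < ⊤ := hMc.measure_lt_top
  have htend : Tendsto (fun k => ∫ x in M, F k x) atTop
      (nhds (∫ x in M, A.indicator (fun _ => (1 : ℝ)) x)) := by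
    refine tendsto_integral_of_dominated_convergence (fun _ => (1 : ℝ))
      (fun k => ((hFcont k).aestronglyMeasurable).restrict) ?_ ?_ ?_
    · exact integrableOn_const hMfin.ne
    · intro k
      refine ae_of_all _ (fun x => ?_)
      rw [Real.norm_of_nonneg (le_max_right _ _)]
      have : 1 - (k : ℝ) * V x ≤ 1 := by
        have := mul_nonneg (Nat.cast_nonneg (α := ℝ) k) (hV0 x); linarith
      exact max_le this zero_le_one
    · rw [ae_restrict_iff' hMmeas]
      refine ae_of_all _ (fun x hx => ?_)
      by_cases h0 : V x = 0
      · have hxA : x ∈ A := (hVzero x hx).1 h0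
        have : ∀ k : ℕ, F k x = 1 := by
          intro k; simp [hF, h0]
        simp only [this, indicator_of_mem hxA]
        exact tendsto_const_nhds
      · have hxA : x ∉ A := fun h => h0 ((hVzero x hx).2 h)
        have hVpos : 0 < V x := lt_of_le_of_ne (hV0 x) (Ne.symm h0)
        rw [indicator_of_notMem hxA]
        refine Tendsto.congr' ?_ tendsto_const_nhds
        filter_upwards [eventually_ge_atTop ⌈1 / V x⌉₊] with k hk
        have h1 : 1 / V x ≤ (k : ℝ) := le_trans (Nat.le_ceil _) (Nat.cast_le.2 hk)
        have h2 : 1 ≤ (k : ℝ) * V x := by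
          rw [div_le_iff₀ hVpos] at h1; linarith
        simp only [hF]
        rw [max_eq_right (by linarith)]
  have hlim : (∫ x in M, A.indicator (fun _ => (1 : ℝ)) x) = (volume A).toReal := by
    rw [setIntegral_indicator hAmeas, inter_eq_self_of_subset_right hAM,
      setIntegral_const, smul_eq_mul, mul_one, Measure.real]
  rw [hlim] at htend
  exact ge_of_tendsto' htend (fun k => csInf_le hbdd (hmem k))
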